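/- Let A be an h-skew-adjoint ℂ-linear endomorphism of ℂ^{n+1}, and let λ, μ ∈ ℂ be two distinct eigenvalues of A (each admitting a nonzero eigenvector) with Re(λ) ≠ 0 and Re(μ) ≠ 0. Then μ = −conj(λ); i.e. an h-skew-adjoint endomorphism has at most one pair of eigenvalues with nonzero real part, and such a pair has the form {λ, −conj(λ)}. -/

import Mathlib

open Complex

/-- The standard hermitian form of signature `(n,1)` on `ℂ^{n+1}`. -/
noncomputable def hForm (n : ℕ) (x y : Fin (n+1) → ℂ) : ℂ :=
  (∑ i : Fin n, x i.castSucc * (starRingEnd ℂ) (y i.castSucc))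
    - x (Fin.last n) * (starRingEnd ℂ) (y (Fin.last n))

/-- An endomorphism of `ℂ^{n+1}` is `h`-skew-adjoint if
`h(Ax,y) + h(x,Ay) = 0` for all `x, y`. -/
def IsHSkewAdjoint (n : ℕ) (A : (Fin (n+1) → ℂ) →ₗ[ℂ] (Fin (n+1) → ℂ)) : Prop :=
  ∀ x y : Fin (n+1) → ℂ, hForm n (A x) y + hForm n x (A y) = 0

lemma hForm_smul_left (n : ℕ) (c : ℂ) (x y : Fin (n+1) → ℂ) :
    hForm n (c • x) y = c * hForm n x y := by
  simp only [hForm, Pi.smul_apply, smul_eq_mul, mul_sub, Finset.mul_sum]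
  ring_nf

lemma hForm_smul_right (n : ℕ) (c : ℂ) (x y : Fin (n+1) → ℂ) :
    hForm n x (c • y) = (starRingEnd ℂ) c * hForm n x y := by
  unfold hForm
  rw [mul_sub, Finset.mul_sum]
  congr 1
  · exact Finset.sum_congr rfl fun i _ => by simp [Pi.smul_apply]; ring
  · simp [Pi.smul_apply]; ring

lemma hForm_sub_left (n : ℕ) (x z y : Fin (n+1) → ℂ) :
    hForm n (x - z) y = hForm n x y - hForm n z y := by
  simp only [hForm, Pi.sub_apply, sub_mul, Finset.sum_sub_distrib]
  ring

lemma hForm_sub_right (n : ℕ) (x y z : Fin (n+1) → ℂ) :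
    hForm n x (y - z) = hForm n x y - hForm n x z := by
  simp only [hForm, Pi.sub_apply, map_sub, mul_sub, Finset.sum_sub_distrib]
  ring

lemma hForm_self_eq_zero (n : ℕ) {x : Fin (n+1) → ℂ}
    (hx : hForm n x x = 0) (hlast : x (Fin.last n) = 0) : x = 0 := by
  have h : (∑ i : Fin n, x i.castSucc * (starRingEnd ℂ) (x i.castSucc)) = 0 := by
    simpa [hForm, hlast] using hx
  have h2 : (∑ i : Fin n, (Complex.normSq (x i.castSucc) : ℂ)) = 0 := by
    simpa [Complex.mul_conj] using h
  have h3 : (∑ i : Fin n, Complex.normSq (x i.castSucc)) = 0 := by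
    exact_mod_cast h2
  have h4 : ∀ i : Fin n, Complex.normSq (x i.castSucc) = 0 := by
    intro i
    have := (Finset.sum_eq_zero_iff_of_nonneg (fun i _ => Complex.normSq_nonneg _)).mp h3
    exact this i (Finset.mem_univ i)
  funext j
  refine Fin.lastCases ?_ ?_ j
  · exact hlast
  · intro i
    exact Complex.normSq_eq_zero.mp (h4 i)

/-- an `h`-skew-adjoint endomorphism has at most one pair of
eigenvalues with nonzero real part, and such a pair has the form
`{λ, −conj(λ)}`: two distinct eigenvalues `λ ≠ μ` with nonzero real parts
satisfy `μ = −conj(λ)`. -/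
theorem eigenvalue_pair_of_re_ne_zero (n : ℕ) (hn : 1 ≤ n)
    (A : (Fin (n+1) → ℂ) →ₗ[ℂ] (Fin (n+1) → ℂ)) (hA : IsHSkewAdjoint n A)
    (lam mu : ℂ) (hne : lam ≠ mu) (hrel : lam.re ≠ 0) (hrem : mu.re ≠ 0)
    (hlam : ∃ x : Fin (n+1) → ℂ, x ≠ 0 ∧ A x = lam • x)
    (hmu : ∃ y : Fin (n+1) → ℂ, y ≠ 0 ∧ A y = mu • y) :
    mu = -(starRingEnd ℂ) lam := by
  obtain ⟨x, hx0, hx⟩ := hlam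
  obtain ⟨y, hy0, hy⟩ := hmu
  -- key identity: for eigenvectors u (a), v (b): (a + conj b) * h u v = 0
  have key : ∀ (u v : Fin (n+1) → ℂ) (a b : ℂ), A u = a • u → A v = b • v →
      (a + (starRingEnd ℂ) b) * hForm n u v = 0 := by
    intro u v a b hu hv
    have := hA u v
    rw [hu, hv, hForm_smul_left, hForm_smul_right] at this
    linear_combination this
  -- isotropy of eigenvectors
  have hxx : hForm n x x = 0 := by
    have h1 := key x x lam lam hx hx
    have h2 : lam + (starRingEnd ℂ) lam ≠ 0 := by
      rw [Complex.add_conj]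
      simp [Complex.ofReal_ne_zero, hrel]
    exact (mul_eq_zero.mp h1).resolve_left h2
  have hyy : hForm n y y = 0 := by
    have h1 := key y y mu mu hy hy
    have h2 : mu + (starRingEnd ℂ) mu ≠ 0 := by
      rw [Complex.add_conj]
      simp [Complex.ofReal_ne_zero, hrem]
    exact (mul_eq_zero.mp h1).resolve_left h2
  by_contra hcon
  have hlm : lam + (starRingEnd ℂ) mu ≠ 0 := by
    intro h
    apply hcon
    have : (starRingEnd ℂ) mu = -lam := by linear_combination h
    calc mu = (starRingEnd ℂ) ((starRingEnd ℂ) mu) := by simp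
    _ = -(starRingEnd ℂ) lam := by rw [this, map_neg]
  have hml : mu + (starRingEnd ℂ) lam ≠ 0 := by
    intro h
    apply hlm
    have := congrArg (starRingEnd ℂ) h
    simp only [map_add, RingHom.id_apply, Complex.conj_conj, map_zero] at this
    linear_combination this
  have hxy : hForm n x y = 0 :=
    (mul_eq_zero.mp (key x y lam mu hx hy)).resolve_left hlm
  have hyx : hForm n y x = 0 :=
    (mul_eq_zero.mp (key y x mu lam hy hx)).resolve_left hml
  -- last coordinates are nonzero
  have hxlast : x (Fin.last n) ≠ 0 := by
    intro h
    exact hx0 (hForm_self_eq_zero n hxx h)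
  have hylast : y (Fin.last n) ≠ 0 := by
    intro h
    exact hy0 (hForm_self_eq_zero n hyy h)
  set c : ℂ := x (Fin.last n) / y (Fin.last n) with hc
  set z : Fin (n+1) → ℂ := x - c • y with hz
  have hzz : hForm n z z = 0 := by
    rw [hz, hForm_sub_left, hForm_sub_right, hForm_sub_right,
      hForm_smul_left, hForm_smul_left, hForm_smul_right, hForm_smul_right,
      hxx, hyy, hxy, hyx]
    ring
  have hzlast : z (Fin.last n) = 0 := by
    simp only [hz, Pi.sub_apply, Pi.smul_apply, smul_eq_mul, hc]
    field_simp
    ring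
  have hz0 : z = 0 := hForm_self_eq_zero n hzz hzlast
  have hxy' : x = c • y := by
    have := hz0
    rw [hz, sub_eq_zero] at this
    exact this
  -- derive lam = mu
  apply hne
  have h1 : lam • x = mu • x := by
    calc lam • x = A x := hx.symm
    _ = A (c • y) := by rw [hxy']
    _ = c • A y := by rw [map_smul]
    _ = c • (mu • y) := by rw [hy]
    _ = mu • (c • y) := smul_comm c mu y
    _ = mu • x := by rw [← hxy']
  have h2 : (lam - mu) • x = 0 := by
    rw [sub_smul, h1, sub_self]
  rcases smul_eq_zero.mp h2 with h | h
  · exact sub_eq_zero.mp h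
  · exact absurd h hx0
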